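/- arXiv:2504.13105 — 3 statements merged into one kernel-verified Lean document; each statement's English description precedes it below -/
import Mathlib

section
/- For every even integer k ≥ 4, there exists a links system for the construction, i.e., a set L of m unordered pairs of nodes of {1,…,n} partitioned into classes P_1,…,P_k satisfying all of the stated properties of a links system. -/
open Finset

namespace CoverSmallCuts

/-- `nn k` is the number `n = 2 + k(k-1)/2` of nodes. -/
def nn (k : ℕ) : ℕ := 2 + k * (k - 1) / 2

/-- `mm k` is the number `m = k(k-1)/2 + k` of links. -/
def mm (k : ℕ) : ℕ := k * (k - 1) / 2 + k

/-- The nested set `N_i = {1, …, i}`. -/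
def Nset (i : ℕ) : Finset ℕ := Finset.Icc 1 i

/-- The Q-set `Q_j = {2+(j-1)k/2, …, 1+j·k/2}`. -/
def Qset (k j : ℕ) : Finset ℕ := Finset.Icc (2 + (j - 1) * (k / 2)) (1 + j * (k / 2))

/-- Capacity of the path edge `{i, i+1}` of the capacitated graph `G`. -/
def pathCap (k i : ℕ) : ℕ :=
  if i = 1 ∨ i = nn k - 1 then 2
  else if ∃ j ∈ Finset.Icc 1 (k - 1), i ∈ Qset k j ∧ i + 1 ∈ Qset k j then 3
  else 1

/-- Capacity of the cut `δ(S)` in the capacitated graph `G`: the sum of the capacities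
of the edges of `G` with exactly one endpoint in `S`. -/
def cutCap (k : ℕ) (S : Finset ℕ) : ℕ :=
  (∑ i ∈ Finset.Icc 1 (nn k - 1),
      if (i ∈ S) ↔ ((i + 1) ∈ S) then 0 else pathCap k i)
  + (∑ j ∈ Finset.Icc 1 (k - 1),
      if ((1 + (j - 1) * (k / 2)) ∈ S) ↔ ((2 + j * (k / 2)) ∈ S) then 0 else 1)

/-- A links system: the `s,t`-paths `P_1, …, P_{k-1}` are recorded by the function
`node`, where `node i t` is the `t`-th node of the path `P_i` (for `1 ≤ i ≤ k-1` and
`0 ≤ t ≤ k/2 + 1`); the class `P_k` consists of the single link `{1, n}`. -/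
structure LinksSystem (k : ℕ) where
  node : ℕ → ℕ → ℕ
  /-- each path `P_i` starts at `s = 1` -/
  node_first : ∀ i ∈ Finset.Icc 1 (k - 1), node i 0 = 1
  /-- each path `P_i` ends at `t = n` -/
  node_last : ∀ i ∈ Finset.Icc 1 (k - 1), node i (k / 2 + 1) = nn k
  /-- node indices strictly increase along each path -/
  node_mono : ∀ i ∈ Finset.Icc 1 (k - 1), ∀ t ≤ k / 2, node i t < node i (t + 1)
  /-- every node in `{2, …, n-1}` is an internal node of exactly one of `P_1, …, P_{k-1}` -/
  cover : ∀ v ∈ Finset.Icc 2 (nn k - 1),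
      ∃! i, i ∈ Finset.Icc 1 (k - 1) ∧ ∃ t ∈ Finset.Icc 1 (k / 2), node i t = v
  /-- `P_i` has an internal node in `Q_j` iff
  `(i ≤ j ≤ min(i+k/2-1, k-1))` or `(j < i and j ≤ i-k/2)` -/
  meetsQ : ∀ i ∈ Finset.Icc 1 (k - 1), ∀ j ∈ Finset.Icc 1 (k - 1),
      ((∃ t ∈ Finset.Icc 1 (k / 2), node i t ∈ Qset k j) ↔
        ((i ≤ j ∧ j ≤ min (i + k / 2 - 1) (k - 1)) ∨ (j < i ∧ j ≤ i - k / 2)))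

/-- The class `P_i` of links: the edge set of the path `P_i` for `i < k`,
and `{{1, n}}` for `i = k`. -/
def LinksSystem.P {k : ℕ} (LS : LinksSystem k) (i : ℕ) : Finset (Sym2 ℕ) :=
  if i = k then {s(1, nn k)}
  else (Finset.Icc 0 (k / 2)).image fun t => s(LS.node i t, LS.node i (t + 1))

/-- The set `L` of all links. -/
def LinksSystem.links {k : ℕ} (LS : LinksSystem k) : Finset (Sym2 ℕ) :=
  (Finset.Icc 1 k).biUnion LS.P

open scoped Classical in
/-- `deltaL F S` is `δ_F(S)`: the set of links of `F` with exactly one endpoint in `S`. -/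
noncomputable def deltaL (F : Finset (Sym2 ℕ)) (S : Finset ℕ) : Finset (Sym2 ℕ) :=
  F.filter fun e => ∃ a b, e = s(a, b) ∧ a ∈ S ∧ b ∉ S

/-- The 0-1 indicator vector `χ^F` of a set `F` of links. -/
noncomputable def chi (F : Finset (Sym2 ℕ)) : Sym2 ℕ → ℝ :=
  fun e => if e ∈ F then 1 else 0


def Jf (k i t : ℕ) : ℕ :=
  if i ≤ k / 2 then i + t - 1
  else if t ≤ i - k / 2 then t
  else t + k / 2 - 1
def Rf (k i t : ℕ) : ℕ :=
  if i ≤ k / 2 then t - 1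
  else if t ≤ i - k / 2 then t + (k - 1) - i
  else t + k / 2 - 1 - i
def nodeFn (k i t : ℕ) : ℕ :=
  if t = 0 then 1
  else if t = k / 2 + 1 then nn k
  else 2 + (Jf k i t - 1) * (k / 2) + Rf k i t
lemma pred_mul {J h : ℕ} (hJ : 1 ≤ J) : J * h = (J - 1) * h + h := by
  nth_rewrite 1 [show J = (J - 1) + 1 by omega]
  rw [add_one_mul]
lemma nn_val {k : ℕ} (hk2 : k % 2 = 0) : nn k = 2 + (k - 1) * (k / 2) := by
  obtain ⟨h, rfl⟩ := Nat.even_iff.mpr hk2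
  have h1 : (h + h) * (h + h - 1) = ((h + h - 1) * h) * 2 := by
    calc (h + h) * (h + h - 1) = (h + h - 1) * (h + h) := Nat.mul_comm _ _
    _ = (h + h - 1) * h + (h + h - 1) * h := Nat.mul_add _ _ _
    _ = ((h + h - 1) * h) * 2 := (Nat.mul_two _).symm
  have h2 : (h + h) / 2 = h := by omega
  unfold nn
  rw [h1, Nat.mul_div_cancel _ (by norm_num), h2]
lemma JR_bounds {k i t : ℕ} (hk : 4 ≤ k) (hk2 : k % 2 = 0)
    (hi1 : 1 ≤ i) (hi2 : i ≤ k - 1) (ht1 : 1 ≤ t) (ht2 : t ≤ k / 2) :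
    1 ≤ Jf k i t ∧ Jf k i t ≤ k - 1 ∧ Rf k i t < k / 2 := by
  unfold Jf Rf
  split_ifs <;> omega
lemma node_internal {k i t : ℕ} (ht1 : 1 ≤ t) (ht2 : t ≤ k / 2) :
    nodeFn k i t = 2 + (Jf k i t - 1) * (k / 2) + Rf k i t := by
  unfold nodeFn
  rw [if_neg (by omega), if_neg (by omega)]
lemma val_lt {J1 R1 J2 R2 h : ℕ} (h1 : 1 ≤ J1) (hJ : J1 < J2) (hR : R1 < h) :
    2 + (J1 - 1) * h + R1 < 2 + (J2 - 1) * h + R2 := by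
  have e : J1 * h = (J1 - 1) * h + h := pred_mul h1
  have m : J1 * h ≤ (J2 - 1) * h := Nat.mul_le_mul_right _ (by omega)
  omega
lemma decomp {h a b c d : ℕ} (hb : b < h) (hd : d < h)
    (he : a * h + b = c * h + d) : a = c ∧ b = d := by
  rcases Nat.lt_trichotomy a c with hlt | heq | hlt
  · have m : (a + 1) * h ≤ c * h := Nat.mul_le_mul_right _ hlt
    rw [add_one_mul] at m; omega
  · subst heq; omega
  · have m : (c + 1) * h ≤ a * h := Nat.mul_le_mul_right _ hlt
    rw [add_one_mul] at m; omega
lemma node_mem_Q {k i t j : ℕ} (hk : 4 ≤ k) (hk2 : k % 2 = 0)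
    (hi1 : 1 ≤ i) (hi2 : i ≤ k - 1) (ht1 : 1 ≤ t) (ht2 : t ≤ k / 2) (hj : 1 ≤ j) :
    nodeFn k i t ∈ Qset k j ↔ Jf k i t = j := by
  obtain ⟨hJ1, hJ2, hR⟩ := JR_bounds hk hk2 hi1 hi2 ht1 ht2
  rw [node_internal ht1 ht2]
  unfold Qset
  rw [Finset.mem_Icc]
  constructor
  · rintro ⟨ha, hb⟩
    by_contra hne
    rcases Nat.lt_or_ge (Jf k i t) j with hlt | hge
    · have m : Jf k i t * (k / 2) ≤ (j - 1) * (k / 2) := Nat.mul_le_mul_right _ (by omega)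
      have e := pred_mul (h := k / 2) hJ1
      omega
    · have m : j * (k / 2) ≤ (Jf k i t - 1) * (k / 2) := Nat.mul_le_mul_right _ (by omega)
      omega
  · rintro rfl
    have e := pred_mul (h := k / 2) hJ1
    omega
lemma i_of_JR {k i t : ℕ} (hk : 4 ≤ k) (hk2 : k % 2 = 0)
    (hi1 : 1 ≤ i) (hi2 : i ≤ k - 1) (ht1 : 1 ≤ t) (ht2 : t ≤ k / 2) :
    i = if Rf k i t < Jf k i t then Jf k i t - Rf k i t
        else Jf k i t + (k - 1) - Rf k i t := by
  unfold Jf Rf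
  split_ifs <;> omega
lemma encode {k j r : ℕ} (hk : 4 ≤ k) (hk2 : k % 2 = 0)
    (hj1 : 1 ≤ j) (hj2 : j ≤ k - 1) (hr : r < k / 2) :
    ∃ i t, 1 ≤ i ∧ i ≤ k - 1 ∧ 1 ≤ t ∧ t ≤ k / 2 ∧ Jf k i t = j ∧ Rf k i t = r ∧
      i = (if r < j then j - r else j + (k - 1) - r) := by
  by_cases hc : r < j
  · by_cases hc2 : j - r ≤ k / 2
    · exact ⟨j - r, r + 1, by omega, by omega, by omega, by omega,
        by unfold Jf; split_ifs <;> omega,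
        by unfold Rf; split_ifs <;> omega, by rw [if_pos hc]⟩
    · exact ⟨j - r, j - k / 2 + 1, by omega, by omega, by omega, by omega,
        by unfold Jf; split_ifs <;> omega,
        by unfold Rf; split_ifs <;> omega, by rw [if_pos hc]⟩
  · exact ⟨j + (k - 1) - r, j, by omega, by omega, by omega, by omega,
      by unfold Jf; split_ifs <;> omega,
      by unfold Rf; split_ifs <;> omega, by rw [if_neg hc]⟩


/-- For every even integer `k ≥ 4`, there exists a links system for the
construction. -/
theorem statement0 (k : ℕ) (hk : 4 ≤ k) (hke : Even k) :
    Nonempty (LinksSystem k) := by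
  have hk2 : k % 2 = 0 := Nat.even_iff.mp hke
  refine ⟨{ node := nodeFn k, node_first := ?_, node_last := ?_, node_mono := ?_,
              cover := ?_, meetsQ := ?_ }⟩
  · -- node_first
    intro i _
    unfold nodeFn
    simp
  · -- node_last
    intro i _
    unfold nodeFn
    rw [if_neg (by omega), if_pos rfl]
  · -- node_mono
    intro i hi t ht
    rw [Finset.mem_Icc] at hi
    rcases Nat.eq_zero_or_pos t with rfl | htpos
    · have h1 : nodeFn k i 0 = 1 := by unfold nodeFn; simp
      have h2 := node_internal (k := k) (i := i) (t := 1) le_rfl (by omega)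
      show nodeFn k i 0 < nodeFn k i 1
      omega
    · rcases Nat.lt_or_ge t (k / 2) with hlt | hge
      · have e1 := node_internal (k := k) (i := i) htpos hlt.le
        have e2 := node_internal (k := k) (i := i) (t := t + 1) (by omega) (by omega)
        obtain ⟨hJ1, hJ2, hR1⟩ := JR_bounds hk hk2 hi.1 hi.2 htpos hlt.le
        have hJmono : Jf k i t < Jf k i (t + 1) := by
          unfold Jf; split_ifs <;> omega
        rw [e1, e2]
        exact val_lt hJ1 hJmono hR1
      · have ht' : t = k / 2 := by omega
        subst ht'
        have e1 := node_internal (k := k) (i := i) (t := k / 2) (by omega) le_rfl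
        have e2 : nodeFn k i (k / 2 + 1) = nn k := by
          unfold nodeFn; rw [if_neg (by omega), if_pos rfl]
        obtain ⟨hJ1, hJ2, hR1⟩ := JR_bounds hk hk2 hi.1 hi.2 (by omega) le_rfl
        have hnn := nn_val hk2
        have m : Jf k i (k / 2) * (k / 2) ≤ (k - 1) * (k / 2) := Nat.mul_le_mul_right _ hJ2
        have e := pred_mul (h := k / 2) hJ1
        omega
  · -- cover
    intro v hv
    rw [Finset.mem_Icc] at hv
    have hnn := nn_val hk2
    set j := (v - 2) / (k / 2) + 1 with hjdef
    set r := (v - 2) % (k / 2) with hrdef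
    have hrh : r < k / 2 := Nat.mod_lt _ (by omega)
    have hvd : v = 2 + (j - 1) * (k / 2) + r := by
      have hdm := Nat.div_add_mod (v - 2) (k / 2)
      have he : (j - 1) * (k / 2) = (k / 2) * ((v - 2) / (k / 2)) := by
        rw [hjdef, Nat.add_sub_cancel, Nat.mul_comm]
      omega
    have hj1 : 1 ≤ j := by rw [hjdef]; exact Nat.le_add_left 1 _
    have hj2 : j ≤ k - 1 := by
      by_contra hc
      have m : (k - 1) * (k / 2) ≤ (j - 1) * (k / 2) := Nat.mul_le_mul_right _ (by omega)
      omega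
    obtain ⟨i, t, hi1, hi2, ht1, ht2, hJ, hR, hieq⟩ := encode hk hk2 hj1 hj2 hrh
    refine ⟨i, ⟨Finset.mem_Icc.mpr ⟨hi1, hi2⟩, t, Finset.mem_Icc.mpr ⟨ht1, ht2⟩, ?_⟩, ?_⟩
    · rw [node_internal ht1 ht2, hJ, hR]
      omega
    · rintro i' ⟨hi'mem, t', ht'mem, hv'⟩
      rw [Finset.mem_Icc] at hi'mem ht'mem
      have hdec := i_of_JR hk hk2 hi'mem.1 hi'mem.2 ht'mem.1 ht'mem.2
      obtain ⟨hJb1, hJb2, hRb⟩ := JR_bounds hk hk2 hi'mem.1 hi'mem.2 ht'mem.1 ht'mem.2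
      have hval := node_internal (k := k) (i := i') ht'mem.1 ht'mem.2
      have heq : (Jf k i' t' - 1) * (k / 2) + Rf k i' t' = (j - 1) * (k / 2) + r := by
        omega
      obtain ⟨e1, e2⟩ := decomp hRb hrh heq
      have eJ : Jf k i' t' = j := by omega
      rw [eJ, e2] at hdec
      rw [hieq, hdec]
  · -- meetsQ
    intro i hi j hj
    rw [Finset.mem_Icc] at hi hj
    constructor
    · rintro ⟨t, htm, hQ⟩
      rw [Finset.mem_Icc] at htm
      rw [node_mem_Q hk hk2 hi.1 hi.2 htm.1 htm.2 hj.1] at hQ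
      unfold Jf at hQ
      split_ifs at hQ <;> omega
    · intro hrhs
      by_cases hih : i ≤ k / 2
      · refine ⟨j - i + 1, Finset.mem_Icc.mpr ⟨by omega, by omega⟩, ?_⟩
        rw [node_mem_Q hk hk2 hi.1 hi.2 (by omega) (by omega) hj.1]
        unfold Jf; split_ifs <;> omega
      · by_cases hjc : j ≤ i - k / 2
        · refine ⟨j, Finset.mem_Icc.mpr ⟨by omega, by omega⟩, ?_⟩
          rw [node_mem_Q hk hk2 hi.1 hi.2 (by omega) (by omega) hj.1]
          unfold Jf; split_ifs <;> omega
        · refine ⟨j - k / 2 + 1, Finset.mem_Icc.mpr ⟨by omega, by omega⟩, ?_⟩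
          rw [node_mem_Q hk hk2 hi.1 hi.2 (by omega) (by omega) hj.1]
          unfold Jf; split_ifs <;> omega


end CoverSmallCuts
end

section
/- For each i = 1,…,n−1, the cut δ(N_i) has capacity less than 5, and for each j = 1,…,k−1, the cut δ(Q_j) has capacity less than 5. -/
open Finset

namespace CoverSmallCuts

private lemma mulh_le {c x y : ℕ} (H : x ≤ y) : x * c ≤ y * c := Nat.mul_le_mul H (le_refl c)

private lemma sum_le_single {s : Finset ℕ} {f : ℕ → ℕ} {a ca : ℕ}
    (hf : ∀ v ∈ s, f v ≤ if v = a then ca else 0) :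
    ∑ v ∈ s, f v ≤ ca := by
  calc ∑ v ∈ s, f v ≤ ∑ v ∈ s, (if v = a then ca else 0) := Finset.sum_le_sum hf
    _ ≤ ca := by
        rw [Finset.sum_ite_eq' s a (fun _ => ca)]
        split <;> omega

private lemma sum_le_pair {s : Finset ℕ} {f : ℕ → ℕ} {a b ca cb : ℕ}
    (hf : ∀ v ∈ s, f v ≤ (if v = a then ca else 0) + (if v = b then cb else 0)) :
    ∑ v ∈ s, f v ≤ ca + cb := by
  calc ∑ v ∈ s, f v
      ≤ ∑ v ∈ s, ((if v = a then ca else 0) + (if v = b then cb else 0)) :=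
        Finset.sum_le_sum hf
    _ = (∑ v ∈ s, if v = a then ca else 0) + (∑ v ∈ s, if v = b then cb else 0) :=
        Finset.sum_add_distrib
    _ ≤ ca + cb := by
        rw [Finset.sum_ite_eq' s a (fun _ => ca), Finset.sum_ite_eq' s b (fun _ => cb)]
        split <;> split <;> omega

private lemma nn_eq (h : ℕ) : nn (2*h) = 2 + h * (2*h - 1) := by
  unfold nn
  rw [mul_assoc, Nat.mul_div_cancel_left _ (by norm_num : 0 < 2)]

private lemma qmem (h j v : ℕ) : v ∈ Qset (2*h) j ↔ 2 + (j-1)*h ≤ v ∧ v ≤ 1 + j*h := by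
  unfold Qset
  rw [Finset.mem_Icc, (by omega : 2*h/2 = h)]

private lemma pathCap_le (k i : ℕ) : pathCap k i ≤ 3 := by
  unfold pathCap; split_ifs <;> omega

private lemma pathCap_end1 (k : ℕ) : pathCap k 1 = 2 := by
  unfold pathCap; rw [if_pos (Or.inl rfl)]

private lemma pathCap_end2 (k : ℕ) : pathCap k (nn k - 1) = 2 := by
  unfold pathCap; rw [if_pos (Or.inr rfl)]

private lemma pathCap_mid {h j : ℕ} (hh : 2 ≤ h) (hj1 : 1 ≤ j) (hj2 : j ≤ 2*h - 2) :
    pathCap (2*h) (1 + j*h) = 1 := by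
  have hnn := nn_eq h
  unfold pathCap
  rw [if_neg, if_neg]
  · rintro ⟨j', hj'r, hm1, hm2⟩
    rw [qmem] at hm1 hm2
    rw [Finset.mem_Icc] at hj'r
    have h1 : (j'-1)*h ≤ j'*h := mulh_le (by omega)
    have h2 : j*h ≤ (j'-1)*h ∨ j'*h ≤ j*h := by
      rcases le_or_gt j' j with hc | hc
      · exact Or.inr (mulh_le hc)
      · exact Or.inl (mulh_le (by omega))
    omega
  · have h1 : 1*h ≤ j*h := mulh_le hj1
    have h2 : j*h ≤ (2*h-2)*h := mulh_le hj2
    have h3 : (2*h-1)*h = (2*h-2)*h + h := by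
      rw [(by omega : 2*h-1 = (2*h-2)+1), add_mul, one_mul]
    have h4 : h*(2*h-1) = (2*h-1)*h := mul_comm _ _
    omega

private theorem aux_part1 (h : ℕ) (hh : 2 ≤ h) :
    ∀ i ∈ Finset.Icc 1 (nn (2*h) - 1), cutCap (2*h) (Nset i) < 5 := by
  have hnn : nn (2*h) = 2 + h*(2*h-1) := nn_eq h
  have hdvd : 2*h/2 = h := by omega
  have hcomm : h*(2*h-1) = (2*h-1)*h := mul_comm _ _
  have he1 : (2*h-1)*h = (2*h-2)*h + h := by
    rw [(by omega : 2*h-1 = (2*h-2)+1), add_mul, one_mul]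
  intro i hi
  rw [Finset.mem_Icc] at hi
  unfold cutCap
  simp only [Nset, Finset.mem_Icc, hdvd]
  by_cases hc1 : i = 1 ∨ i = nn (2*h) - 1
  · rcases hc1 with rfl | rfl
    · -- i = 1
      refine lt_of_le_of_lt (add_le_add ?_ ?_) (by norm_num : 2 + 1 < 5)
      · apply sum_le_single (a := 1) (ca := 2)
        intro v hv
        rw [Finset.mem_Icc] at hv
        rcases eq_or_ne v 1 with rfl | h1
        · have hpa := pathCap_end1 (2*h)
          split_ifs <;> omega
        · split_ifs <;> omega
      · apply sum_le_single (a := 1) (ca := 1)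
        intro j' hj'
        rw [Finset.mem_Icc] at hj'
        have hd : j' = 1 ∨ 2 ≤ (j'-1)*h := by
          rcases eq_or_ne j' 1 with hc | hc
          · exact Or.inl hc
          · right; have := mulh_le (c := h) (show 1 ≤ j'-1 by omega); omega
        split_ifs <;> omega
    · -- i = nn (2*h) - 1
      refine lt_of_le_of_lt (add_le_add ?_ ?_) (by norm_num : 2 + 1 < 5)
      · apply sum_le_single (a := nn (2*h) - 1) (ca := 2)
        intro v hv
        rw [Finset.mem_Icc] at hv
        rcases eq_or_ne v (nn (2*h) - 1) with rfl | h1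
        · have hpa := pathCap_end2 (2*h)
          split_ifs <;> omega
        · split_ifs <;> omega
      · apply sum_le_single (a := 2*h-1) (ca := 1)
        intro j' hj'
        rw [Finset.mem_Icc] at hj'
        have hXY : (j'-1)*h + h = j'*h := by
          calc (j'-1)*h + h = (j'-1+1)*h := by rw [add_mul, one_mul]
            _ = j'*h := by rw [(by omega : j'-1+1 = j')]
        have hd : j' = 2*h-1 ∨ j'*h ≤ (2*h-2)*h := by
          rcases eq_or_ne j' (2*h-1) with hc | hc
          · exact Or.inl hc
          · exact Or.inr (mulh_le (by omega))
        split_ifs <;> omega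
  · by_cases hc2 : ∃ j ∈ Finset.Icc 1 (2*h - 1), i ∈ Qset (2*h) j ∧ i + 1 ∈ Qset (2*h) j
    · -- same-Q case
      obtain ⟨j, hjr, hm1, hm2⟩ := hc2
      rw [Finset.mem_Icc] at hjr
      rw [qmem] at hm1 hm2
      refine lt_of_le_of_lt (add_le_add ?_ ?_) (by norm_num : 3 + 1 < 5)
      · apply sum_le_single (a := i) (ca := 3)
        intro v hv
        rw [Finset.mem_Icc] at hv
        have := pathCap_le (2*h) v
        split_ifs <;> omega
      · apply sum_le_single (a := j) (ca := 1)
        intro j' hj'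
        rw [Finset.mem_Icc] at hj'
        have hXY : (j'-1)*h + h = j'*h := by
          calc (j'-1)*h + h = (j'-1+1)*h := by rw [add_mul, one_mul]
            _ = j'*h := by rw [(by omega : j'-1+1 = j')]
        have hd : j' = j ∨ (j' < j ∧ j'*h ≤ (j-1)*h) ∨ (j < j' ∧ j*h ≤ (j'-1)*h) := by
          rcases lt_trichotomy j' j with hc | hc | hc
          · exact Or.inr (Or.inl ⟨hc, mulh_le (by omega)⟩)
          · exact Or.inl hc
          · exact Or.inr (Or.inr ⟨hc, mulh_le (by omega)⟩)
        split_ifs <;> omega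
    · -- plain case: pathCap = 1
      have hpv : pathCap (2*h) i = 1 := by
        unfold pathCap; rw [if_neg hc1, if_neg hc2]
      obtain ⟨q, r, hqr, hr⟩ : ∃ q r, i - 1 = q * h + r ∧ r < h :=
        ⟨(i-1)/h, (i-1)%h, by rw [mul_comm]; exact (Nat.div_add_mod _ _).symm,
          Nat.mod_lt _ (by omega)⟩
      refine lt_of_le_of_lt (add_le_add ?_ ?_) (by norm_num : 1 + (1 + 1) < 5)
      · apply sum_le_single (a := i) (ca := 1)
        intro v hv
        rw [Finset.mem_Icc] at hv
        have hd : pathCap (2*h) v = 1 ∨ v ≠ i := by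
          rcases eq_or_ne v i with rfl | hne
          · exact Or.inl hpv
          · exact Or.inr hne
        split_ifs <;> omega
      · apply sum_le_pair (a := q) (b := q+1) (ca := 1) (cb := 1)
        intro j' hj'
        rw [Finset.mem_Icc] at hj'
        have hXY : (j'-1)*h + h = j'*h := by
          calc (j'-1)*h + h = (j'-1+1)*h := by rw [add_mul, one_mul]
            _ = j'*h := by rw [(by omega : j'-1+1 = j')]
        have hZ : (j'+1)*h = j'*h + h := by rw [add_mul, one_mul]
        have e2 : (q+2)*h = q*h + 2*h := by rw [add_mul]
        have d1 : q ≤ j' ∨ (j'+1)*h ≤ q*h := by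
          rcases le_or_gt q j' with hc | hc
          · exact Or.inl hc
          · exact Or.inr (mulh_le (by omega))
        have d2 : j' ≤ q+1 ∨ (q+2)*h ≤ j'*h := by
          rcases le_or_gt j' (q+1) with hc | hc
          · exact Or.inl hc
          · exact Or.inr (mulh_le (by omega))
        split_ifs <;> omega

private theorem aux_part2 (h : ℕ) (hh : 2 ≤ h) :
    ∀ j ∈ Finset.Icc 1 (2*h - 1), cutCap (2*h) (Qset (2*h) j) < 5 := by
  have hnn : nn (2*h) = 2 + h*(2*h-1) := nn_eq h
  have hdvd : 2*h/2 = h := by omega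
  have hcomm : h*(2*h-1) = (2*h-1)*h := mul_comm _ _
  have he1 : (2*h-1)*h = (2*h-2)*h + h := by
    rw [(by omega : 2*h-1 = (2*h-2)+1), add_mul, one_mul]
  intro j hj
  rw [Finset.mem_Icc] at hj
  obtain ⟨p, rfl⟩ : ∃ p, j = p + 1 := ⟨j - 1, by omega⟩
  unfold cutCap
  simp only [qmem, hdvd, Nat.add_sub_cancel]
  have ep : (p+1)*h = p*h + h := by rw [add_mul, one_mul]
  have ep2 : (p+2)*h = p*h + 2*h := by rw [add_mul]
  -- pathCap facts at the two crossing path edges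
  have hpa1 : p = 0 → pathCap (2*h) (1 + p*h) = 2 := by
    intro hp
    have hp0 : p*h = 0 := by rw [hp]; exact zero_mul h
    rw [(by omega : 1 + p*h = 1)]
    exact pathCap_end1 _
  have hpa2 : 1 ≤ p → p ≤ 2*h-2 → pathCap (2*h) (1 + p*h) = 1 := fun h1 h2 =>
    pathCap_mid hh h1 h2
  have hpb1 : p = 2*h-2 → pathCap (2*h) (1 + p*h + h) = 2 := by
    intro hp
    have hph : p*h = (2*h-2)*h := by rw [hp]
    rw [(by omega : 1 + p*h + h = nn (2*h) - 1)]
    exact pathCap_end2 _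
  have hpb2 : p ≤ 2*h-3 → pathCap (2*h) (1 + p*h + h) = 1 := by
    intro h2
    rw [(by omega : 1 + p*h + h = 1 + (p+1)*h)]
    exact pathCap_mid hh (by omega) (by omega)
  -- classify p
  rcases (show p = 0 ∨ p = 2*h-2 ∨ (1 ≤ p ∧ p ≤ 2*h-3) by omega) with hp | hp | ⟨hp1, hp2⟩
  · -- j = 1
    have hA := hpa1 hp
    have hB := hpb2 (by omega)
    have hp0 : p*h = 0 := by rw [hp]; exact zero_mul h
    refine lt_of_le_of_lt (add_le_add ?_ ?_) (by norm_num : (2 + 1) + 1 < 5)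
    · apply sum_le_pair (a := 1 + p*h) (b := 1 + p*h + h) (ca := 2) (cb := 1)
      intro v hv
      rw [Finset.mem_Icc] at hv
      rcases eq_or_ne v (1 + p*h) with h1 | h1
      · subst h1; split_ifs <;> omega
      · rcases eq_or_ne v (1 + p*h + h) with h2 | h2
        · subst h2; split_ifs <;> omega
        · split_ifs <;> omega
    · apply sum_le_single (a := p + 2) (ca := 1)
      intro j' hj'
      rw [Finset.mem_Icc] at hj'
      have hXY : (j'-1)*h + h = j'*h := by
        calc (j'-1)*h + h = (j'-1+1)*h := by rw [add_mul, one_mul]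
          _ = j'*h := by rw [(by omega : j'-1+1 = j')]
      have d3 : j' ≠ p + 1 ∨ (j'-1)*h = p*h := by
        rcases eq_or_ne j' (p+1) with hc | hc
        · right; rw [hc, Nat.add_sub_cancel]
        · exact Or.inl hc
      have d2 : j' ≤ p + 2 ∨ (p+2)*h ≤ (j'-1)*h := by
        rcases le_or_gt j' (p+2) with hc | hc
        · exact Or.inl hc
        · exact Or.inr (mulh_le (by omega))
      split_ifs <;> omega
  · -- j = 2h-1
    have hA := hpa2 (by omega) (by omega)
    have hB := hpb1 hp
    have hph : p*h = (2*h-2)*h := by rw [hp]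
    refine lt_of_le_of_lt (add_le_add ?_ ?_) (by norm_num : (1 + 2) + 1 < 5)
    · apply sum_le_pair (a := 1 + p*h) (b := 1 + p*h + h) (ca := 1) (cb := 2)
      intro v hv
      rw [Finset.mem_Icc] at hv
      rcases eq_or_ne v (1 + p*h) with h1 | h1
      · subst h1; split_ifs <;> omega
      · rcases eq_or_ne v (1 + p*h + h) with h2 | h2
        · subst h2; split_ifs <;> omega
        · split_ifs <;> omega
    · apply sum_le_single (a := p) (ca := 1)
      intro j' hj'
      rw [Finset.mem_Icc] at hj'
      have hXY : (j'-1)*h + h = j'*h := by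
        calc (j'-1)*h + h = (j'-1+1)*h := by rw [add_mul, one_mul]
          _ = j'*h := by rw [(by omega : j'-1+1 = j')]
      have hZ : (j'+1)*h = j'*h + h := by rw [add_mul, one_mul]
      have d3 : j' ≠ p + 1 ∨ (j'-1)*h = p*h := by
        rcases eq_or_ne j' (p+1) with hc | hc
        · right; rw [hc, Nat.add_sub_cancel]
        · exact Or.inl hc
      have d4 : j' + 1 ≠ p ∨ (j'+1)*h = p*h := by
        rcases eq_or_ne (j'+1) p with hc | hc
        · right; rw [hc]
        · exact Or.inl hc
      have d1 : p ≤ j' + 1 ∨ (j'+1)*h ≤ p*h := by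
        rcases le_or_gt p (j'+1) with hc | hc
        · exact Or.inl hc
        · exact Or.inr (mulh_le (by omega))
      split_ifs <;> omega
  · -- middle
    have hA := hpa2 hp1 (by omega)
    have hB := hpb2 hp2
    refine lt_of_le_of_lt (add_le_add ?_ ?_) (by norm_num : (1 + 1) + (1 + 1) < 5)
    · apply sum_le_pair (a := 1 + p*h) (b := 1 + p*h + h) (ca := 1) (cb := 1)
      intro v hv
      rw [Finset.mem_Icc] at hv
      rcases eq_or_ne v (1 + p*h) with h1 | h1
      · subst h1; split_ifs <;> omega
      · rcases eq_or_ne v (1 + p*h + h) with h2 | h2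
        · subst h2; split_ifs <;> omega
        · split_ifs <;> omega
    · apply sum_le_pair (a := p) (b := p + 2) (ca := 1) (cb := 1)
      intro j' hj'
      rw [Finset.mem_Icc] at hj'
      have hXY : (j'-1)*h + h = j'*h := by
        calc (j'-1)*h + h = (j'-1+1)*h := by rw [add_mul, one_mul]
          _ = j'*h := by rw [(by omega : j'-1+1 = j')]
      have hZ : (j'+1)*h = j'*h + h := by rw [add_mul, one_mul]
      have d3 : j' ≠ p + 1 ∨ (j'-1)*h = p*h := by
        rcases eq_or_ne j' (p+1) with hc | hc
        · right; rw [hc, Nat.add_sub_cancel]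
        · exact Or.inl hc
      have d4 : j' + 1 ≠ p ∨ (j'+1)*h = p*h := by
        rcases eq_or_ne (j'+1) p with hc | hc
        · right; rw [hc]
        · exact Or.inl hc
      have d1 : p ≤ j' + 1 ∨ (j'+1)*h ≤ p*h := by
        rcases le_or_gt p (j'+1) with hc | hc
        · exact Or.inl hc
        · exact Or.inr (mulh_le (by omega))
      have d2 : j' ≤ p + 2 ∨ (p+2)*h ≤ (j'-1)*h := by
        rcases le_or_gt j' (p+2) with hc | hc
        · exact Or.inl hc
        · exact Or.inr (mulh_le (by omega))
      split_ifs <;> omega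


/-- each nested cut `δ(N_i)` (`i = 1, …, n-1`) and each Q-cut `δ(Q_j)`
(`j = 1, …, k-1`) has capacity less than `5`. -/
theorem statement1 (k : ℕ) (hk : 4 ≤ k) (hke : Even k) :
    (∀ i ∈ Finset.Icc 1 (nn k - 1), cutCap k (Nset i) < 5) ∧
    (∀ j ∈ Finset.Icc 1 (k - 1), cutCap k (Qset k j) < 5) := by
  obtain ⟨h, hh'⟩ := hke
  have hk2 : k = 2*h := by omega
  subst hk2
  exact ⟨aux_part1 h (by omega), aux_part2 h (by omega)⟩

end CoverSmallCuts
end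

section
/- Let k ≥ 4 be an even integer and let M be the (k−1)×(k−1) rational matrix with rows and columns indexed by 0,…,k−2 and M_{i,j} = 1 if (j − i) mod (k−1) ∈ {0,1,…,k/2−1} and M_{i,j} = 0 otherwise (a circulant 0–1 matrix each of whose rows consists of k/2 consecutive ones with wrap-around). Then M has rank k−1 and det M = k/2. -/
open Finset

namespace CoverSmallCuts

private lemma mod_two_lt {n a : ℕ} (h : a < 2 * n) :
    a % n = if a < n then a else a - n := by
  split_ifs with h1
  · exact Nat.mod_eq_of_lt h1
  · have h2 : a - n < n := by omega
    have h3 : a % n = (a - n) % n := by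
      conv_lhs => rw [show a = (a - n) + n by omega]
      exact Nat.add_mod_right _ _
    rw [h3, Nat.mod_eq_of_lt h2]

private lemma mod_sub {n x y : ℕ} (hx : x < n) (hy : y < n) :
    (y + n - x) % n = if x ≤ y then y - x else y + n - x := by
  have h : y + n - x < 2 * n := by omega
  rw [mod_two_lt h]
  split_ifs <;> omega

private lemma cancel_mul_two {n c : ℕ} (hc : n + 1 = 2 * c) {a b : ℕ}
    (h : (2 * a) % n = (2 * b) % n) : a % n = b % n := by
  have h2 : (2 * a * c) % n = (2 * b * c) % n := Nat.ModEq.mul_right c h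
  have e : ∀ t : ℕ, 2 * t * c = t + t * n := by
    intro t
    calc 2 * t * c = t * (2 * c) := by ring
      _ = t * (n + 1) := by rw [← hc]
      _ = t + t * n := by ring
  rwa [e a, e b, Nat.add_mul_mod_self_right, Nat.add_mul_mod_self_right] at h2

private lemma cancel_mul_c {n c : ℕ} (hc : n + 1 = 2 * c) {a b : ℕ}
    (h : (a * c) % n = (b * c) % n) : a % n = b % n := by
  have h2 : (a * c * 2) % n = (b * c * 2) % n := Nat.ModEq.mul_right 2 h
  have e : ∀ t : ℕ, t * c * 2 = t + t * n := by
    intro t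
    calc t * c * 2 = t * (2 * c) := by ring
      _ = t * (n + 1) := by rw [← hc]
      _ = t + t * n := by ring
  rwa [e a, e b, Nat.add_mul_mod_self_right, Nat.add_mul_mod_self_right] at h2

private lemma core_diff {n c : ℕ} (hn : 3 ≤ n) (hc : n + 1 = 2 * c)
    (x x2 y : Fin n) (hx2 : (x2 : ℕ) = ((x : ℕ) + 1) % n) :
    ((if ((y : ℕ) + n - (x : ℕ)) % n < c then (1 : ℚ) else 0) -
      (if ((y : ℕ) + n - (x2 : ℕ)) % n < c then 1 else 0)) =
    (if y = x then 1 else 0) - (if (y : ℕ) = ((x : ℕ) + c) % n then 1 else 0) := by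
  have hxn := x.isLt; have hyn := y.isLt; have hx2n := x2.isLt
  have hx2' : (x2 : ℕ) = if (x : ℕ) + 1 < n then (x : ℕ) + 1 else (x : ℕ) + 1 - n := by
    rw [hx2, mod_two_lt (by omega)]
  rw [mod_sub hxn hyn, mod_sub hx2n hyn, mod_two_lt (show (x : ℕ) + c < 2 * n by omega)]
  simp only [Fin.ext_iff]
  split_ifs at hx2' ⊢ <;> first | (exfalso; omega) | norm_num

private theorem circ_det {n c : ℕ} (hn : 3 ≤ n) (hc : n + 1 = 2 * c)
    (M : Matrix (Fin n) (Fin n) ℚ)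
    (hM : ∀ i j : Fin n, M i j = if ((j : ℕ) + n - (i : ℕ)) % n < c then 1 else 0) :
    M.det = c := by
  have npos : 0 < n := by omega
  have hc2 : 2 ≤ c := by omega
  have hcn : c < n := by omega
  -- the reindexing permutation w
  set w : Fin n → Fin n := fun t => ⟨(c - 1 + (t : ℕ) * c) % n, Nat.mod_lt _ npos⟩ with hwdef
  have winj : Function.Injective w := by
    intro t t' h
    have h1 : (c - 1 + (t : ℕ) * c) % n = (c - 1 + (t' : ℕ) * c) % n := by
      simpa [hwdef, Fin.ext_iff] using h
    have h2 : ((t : ℕ) * c) % n = ((t' : ℕ) * c) % n :=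
      Nat.ModEq.add_left_cancel' (c - 1) h1
    have h3 := cancel_mul_c hc h2
    exact Fin.ext (by rwa [Nat.mod_eq_of_lt t.isLt, Nat.mod_eq_of_lt t'.isLt] at h3)
  let wE : Fin n ≃ Fin n := Equiv.ofBijective w (Finite.injective_iff_bijective.mp winj)
  -- the shift-by-2 map t2
  set t2 : Fin n → Fin n := fun t => ⟨((t : ℕ) + 2) % n, Nat.mod_lt _ npos⟩ with ht2def
  -- key computation: w (t2 t) = w t + 1 (mod n)
  have hwt2 : ∀ t : Fin n, (w (t2 t) : ℕ) = ((w t : ℕ) + 1) % n := by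
    intro t
    show (c - 1 + (((t : ℕ) + 2) % n) * c) % n = ((c - 1 + (t : ℕ) * c) % n + 1) % n
    have e1 : (c - 1 + (((t : ℕ) + 2) % n) * c) % n = (c - 1 + ((t : ℕ) + 2) * c) % n :=
      Nat.ModEq.add_left _ (Nat.ModEq.mul_right c (Nat.mod_modEq _ _))
    have e2 : c - 1 + ((t : ℕ) + 2) * c = (c - 1 + (t : ℕ) * c + 1) + n := by
      calc c - 1 + ((t : ℕ) + 2) * c = c - 1 + ((t : ℕ) * c + 2 * c) := by ring_nf
        _ = c - 1 + ((t : ℕ) * c + (n + 1)) := by rw [← hc]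
        _ = (c - 1 + (t : ℕ) * c + 1) + n := by omega
    rw [e1, e2, Nat.add_mod_right, ← Nat.mod_add_mod]
  -- key computation: w (t+1) = w t + c (mod n)
  have hwt1 : ∀ (t : Fin n) (h : (t : ℕ) + 1 < n),
      (w (⟨(t : ℕ) + 1, h⟩ : Fin n) : ℕ) = ((w t : ℕ) + c) % n := by
    intro t h
    show (c - 1 + ((t : ℕ) + 1) * c) % n = ((c - 1 + (t : ℕ) * c) % n + c) % n
    have e2 : c - 1 + ((t : ℕ) + 1) * c = c - 1 + (t : ℕ) * c + c := by ring_nf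
    rw [e2, ← Nat.mod_add_mod]
  -- the row-difference identity
  have rowdiff : ∀ t u : Fin n, (t : ℕ) ≠ n - 1 →
      M.submatrix w w t u - M.submatrix w w (t2 t) u
        = (if u = t then (1 : ℚ) else 0) - (if (u : ℕ) = (t : ℕ) + 1 then 1 else 0) := by
    intro t u ht
    have htn : (t : ℕ) + 1 < n := by have := t.isLt; omega
    rw [Matrix.submatrix_apply, Matrix.submatrix_apply, hM, hM,
      core_diff hn hc (w t) (w (t2 t)) (w u) (hwt2 t)]
    congr 1
    · by_cases h : u = t
      · simp [h]
      · rw [if_neg h, if_neg (fun hw => h (winj hw))]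
    · rw [← hwt1 t htn]
      have hiff : ((w u : ℕ) = (w (⟨(t : ℕ) + 1, htn⟩ : Fin n) : ℕ)) ↔ ((u : ℕ) = (t : ℕ) + 1) := by
        rw [← Fin.ext_iff, winj.eq_iff, Fin.ext_iff]
      by_cases h : (u : ℕ) = (t : ℕ) + 1
      · rw [if_pos (hiff.mpr h), if_pos h]
      · rw [if_neg (fun hw => h (hiff.mp hw)), if_neg h]
  -- row sums of M are all c
  have rowsum : ∀ x : Fin n, (∑ y : Fin n, M x y) = (c : ℚ) := by
    intro x
    set s : Fin n → Fin n := fun y => ⟨((y : ℕ) + n - (x : ℕ)) % n, Nat.mod_lt _ npos⟩ with hsdef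
    have sinj : Function.Injective s := by
      intro y y' h
      have h1 : ((y : ℕ) + n - (x : ℕ)) % n = ((y' : ℕ) + n - (x : ℕ)) % n := by
        simpa [hsdef, Fin.ext_iff] using h
      have hx := x.isLt
      have h2 : ((y : ℕ) + n - (x : ℕ) + (x : ℕ)) % n = ((y' : ℕ) + n - (x : ℕ) + (x : ℕ)) % n :=
        Nat.ModEq.add_right _ h1
      rw [show (y : ℕ) + n - (x : ℕ) + (x : ℕ) = (y : ℕ) + n by omega,
        show (y' : ℕ) + n - (x : ℕ) + (x : ℕ) = (y' : ℕ) + n by omega,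
        Nat.add_mod_right, Nat.add_mod_right, Nat.mod_eq_of_lt y.isLt,
        Nat.mod_eq_of_lt y'.isLt] at h2
      exact Fin.ext h2
    have hbij : Function.Bijective s := Finite.injective_iff_bijective.mp sinj
    have step1 : (∑ y : Fin n, M x y) = ∑ d : Fin n, (if (d : ℕ) < c then (1 : ℚ) else 0) :=
      Fintype.sum_bijective s hbij _ _ (fun y => by rw [hM])
    rw [step1, Fin.sum_univ_eq_sum_range (fun j => if j < c then (1 : ℚ) else 0),
      Finset.sum_ite, Finset.sum_const, Finset.sum_const_zero, add_zero,
      show (Finset.range n).filter (fun j => j < c) = Finset.range c from by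
        ext j; simp only [Finset.mem_filter, Finset.mem_range]; omega]
    simp
  -- the matrices
  set A : Matrix (Fin n) (Fin n) ℚ := M.submatrix w w with hAdef
  set F : Matrix (Fin n) (Fin n) ℚ := fun t v =>
    (if v = t then (1 : ℚ) else 0) -
      (if (t : ℕ) = n - 1 then 0 else if v = t2 t then 1 else 0) with hFdef
  set G : Matrix (Fin n) (Fin n) ℚ := fun u v =>
    if (u : ℕ) ≤ (v : ℕ) then (1 : ℚ) else 0 with hGdef
  have hFA : ∀ t u : Fin n, (F * A) t u
      = A t u - (if (t : ℕ) = n - 1 then 0 else A (t2 t) u) := by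
    intro t u
    rw [Matrix.mul_apply]
    by_cases ht : (t : ℕ) = n - 1 <;>
      simp [hFdef, ht, sub_mul, ite_mul, Finset.sum_sub_distrib, Finset.sum_ite_eq']
  have htlast : n - 1 < n := by omega
  set tl : Fin n := ⟨n - 1, htlast⟩ with htldef
  have hT : ∀ t v : Fin n, (t : ℕ) ≠ n - 1 →
      ((F * A) * G) t v = if v = t then (1 : ℚ) else 0 := by
    intro t v ht
    have htn : (t : ℕ) + 1 < n := by have := t.isLt; omega
    set t1 : Fin n := ⟨(t : ℕ) + 1, htn⟩ with ht1def
    have hB : ∀ u : Fin n, (F * A) t u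
        = (if u = t then (1 : ℚ) else 0) - (if u = t1 then 1 else 0) := by
      intro u
      rw [hFA, if_neg ht, rowdiff t u ht]
      congr 1
      by_cases h : u = t1
      · rw [if_pos h, if_pos (by rw [h])]
      · rw [if_neg h, if_neg (fun hv => h (Fin.ext hv))]
    rw [Matrix.mul_apply]
    simp only [hB, sub_mul, ite_mul, one_mul, zero_mul]
    rw [Finset.sum_sub_distrib, Finset.sum_ite_eq' Finset.univ t (fun u => G u v),
      Finset.sum_ite_eq' Finset.univ t1 (fun u => G u v)]
    simp only [Finset.mem_univ, if_true, hGdef]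
    have hval1 : (t1 : ℕ) = (t : ℕ) + 1 := rfl
    by_cases hv : v = t
    · rw [if_pos hv, if_pos (le_of_eq (by rw [hv])), if_neg (by rw [hv]; omega)]
      norm_num
    · rw [if_neg hv]
      have hv' : (v : ℕ) ≠ (t : ℕ) := fun h => hv (Fin.ext h)
      split_ifs <;> first | (exfalso; omega) | norm_num
  have hTl : ((F * A) * G) tl tl = (c : ℚ) := by
    rw [Matrix.mul_apply]
    have htlv : (tl : ℕ) = n - 1 := rfl
    have h1 : ∀ u : Fin n, (F * A) tl u * G u tl = A tl u := by
      intro u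
      rw [hFA, if_pos htlv, sub_zero]
      have hG1 : G u tl = 1 := by
        simp only [hGdef]
        exact if_pos (by have := u.isLt; omega)
      rw [hG1, mul_one]
    simp only [h1]
    have h2 : (∑ u : Fin n, A tl u) = ∑ y : Fin n, M (w tl) y :=
      Fintype.sum_bijective w (Finite.injective_iff_bijective.mp winj) _ _ (fun u => rfl)
    rw [h2, rowsum]
  have hdet1 : A.det = M.det := Matrix.det_submatrix_equiv_self wE M
  -- det F = 1
  set sg : Fin n → Fin n := fun s => ⟨(2 * (s : ℕ) + 1) % n, Nat.mod_lt _ npos⟩ with hsgdef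
  have sginj : Function.Injective sg := by
    intro a b h
    have h1 : (2 * (a : ℕ) + 1) % n = (2 * (b : ℕ) + 1) % n := by
      simpa [hsgdef, Fin.ext_iff] using h
    have h2 : (2 * (a : ℕ)) % n = (2 * (b : ℕ)) % n := Nat.ModEq.add_right_cancel' 1 h1
    have h3 := cancel_mul_two hc h2
    exact Fin.ext (by rwa [Nat.mod_eq_of_lt a.isLt, Nat.mod_eq_of_lt b.isLt] at h3)
  let sgE : Fin n ≃ Fin n := Equiv.ofBijective sg (Finite.injective_iff_bijective.mp sginj)
  have hFdiag : ∀ s : Fin n, F s s = 1 := by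
    intro s
    have hne : s ≠ t2 s := by
      intro hcon
      have hval : (s : ℕ) = ((s : ℕ) + 2) % n := congrArg Fin.val hcon
      rw [mod_two_lt (by have := s.isLt; omega)] at hval
      have hsn := s.isLt
      split_ifs at hval <;> omega
    simp [hFdef, hne]
  have hFtri : (F.submatrix (⇑sgE) (⇑sgE)).BlockTriangular id := by
    intro a b hab
    have hab' : (b : ℕ) < (a : ℕ) := hab
    show (if sg b = sg a then (1 : ℚ) else 0) -
      (if ((sg a : Fin n) : ℕ) = n - 1 then 0 else if sg b = t2 (sg a) then 1 else 0) = 0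
    have hne : sg b ≠ sg a := fun h => (Nat.ne_of_lt hab') (congrArg Fin.val (sginj h))
    by_cases hs : ((sg a : Fin n) : ℕ) = n - 1
    · rw [if_neg hne, if_pos hs, sub_zero]
    · have hne2 : sg b ≠ t2 (sg a) := by
        intro hcon
        have hsa : (sg a : ℕ) = (2 * (a : ℕ) + 1) % n := rfl
        have han : (a : ℕ) < n := a.isLt
        by_cases ha : (a : ℕ) = n - 1
        · apply hs
          rw [hsa, ha, show 2 * (n - 1) + 1 = (n - 1) + n from by omega,
            Nat.add_mod_right, Nat.mod_eq_of_lt (by omega)]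
        · have han1 : (a : ℕ) + 1 < n := by omega
          have hval : (sg b : ℕ) = ((sg a : ℕ) + 2) % n := congrArg Fin.val hcon
          have h3 : ((sg a : ℕ) + 2) % n = (2 * ((a : ℕ) + 1) + 1) % n := by
            rw [hsa, Nat.mod_add_mod, show 2 * (a : ℕ) + 1 + 2 = 2 * ((a : ℕ) + 1) + 1 from by ring]
          have h4 : sg b = sg ⟨(a : ℕ) + 1, han1⟩ := Fin.ext (by rw [hval, h3])
          have h5 : (b : ℕ) = (a : ℕ) + 1 := congrArg Fin.val (sginj h4)
          omega
      rw [if_neg hne, if_neg hs, if_neg hne2, sub_zero]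
  have hdetF : F.det = 1 := by
    rw [← Matrix.det_submatrix_equiv_self sgE F, Matrix.det_of_upperTriangular hFtri]
    exact Finset.prod_eq_one fun s _ => hFdiag (sg s)
  have hGtri : G.BlockTriangular id := by
    intro a b hab
    have hab' : (b : ℕ) < (a : ℕ) := hab
    simp only [hGdef]
    exact if_neg (by omega)
  have hdetG : G.det = 1 := by
    rw [Matrix.det_of_upperTriangular hGtri]
    exact Finset.prod_eq_one fun s _ => by simp [hGdef]
  have hTtri : ((F * A) * G).BlockTriangular OrderDual.toDual := by
    intro a b hab
    have hab' : (a : ℕ) < (b : ℕ) := hab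
    have ha : (a : ℕ) ≠ n - 1 := by have := b.isLt; omega
    rw [hT a b ha]
    exact if_neg (fun h => (Nat.ne_of_lt hab') (congrArg Fin.val h).symm)
  have hdetT : ((F * A) * G).det = c := by
    rw [Matrix.det_of_lowerTriangular _ hTtri]
    have hdiag : ∀ t : Fin n, ((F * A) * G) t t = if t = tl then (c : ℚ) else 1 := by
      intro t
      by_cases h : t = tl
      · rw [h, if_pos rfl]; exact hTl
      · rw [if_neg h, hT t t (fun hv => h (Fin.ext hv))]
        exact if_pos rfl
    rw [Finset.prod_congr rfl (fun t _ => hdiag t),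
      Finset.prod_ite_eq' Finset.univ tl (fun _ => (c : ℚ))]
    simp
  have hmul : ((F * A) * G).det = F.det * A.det * G.det := by
    rw [Matrix.det_mul, Matrix.det_mul]
  rw [hdetF, one_mul, hdetG, mul_one] at hmul
  rw [← hdet1, ← hmul, hdetT]

/-- the `(k-1) × (k-1)` circulant 0-1 matrix over `ℚ` whose `(i,j)` entry is
`1` exactly when `(j - i) mod (k-1) ∈ {0, 1, …, k/2 - 1}` has rank `k-1` and
determinant `k/2`. -/
theorem statement3 (k : ℕ) (hk : 4 ≤ k) (hke : Even k)
    (M : Matrix (Fin (k - 1)) (Fin (k - 1)) ℚ)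
    (hM : ∀ i j : Fin (k - 1),
      M i j = if ((j : ℕ) + (k - 1) - (i : ℕ)) % (k - 1) < k / 2 then 1 else 0) :
    M.rank = k - 1 ∧ M.det = (k / 2 : ℕ) := by
  have hn : 3 ≤ k - 1 := by omega
  have hc : (k - 1) + 1 = 2 * (k / 2) := by
    obtain ⟨m, hm⟩ := hke; omega
  have hdet : M.det = ((k / 2 : ℕ) : ℚ) := circ_det hn hc M hM
  refine ⟨?_, hdet⟩
  have hne : M.det ≠ 0 := by
    rw [hdet]
    exact_mod_cast Nat.cast_ne_zero.mpr (show k / 2 ≠ 0 by omega)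
  have hu : IsUnit M := (Matrix.isUnit_iff_isUnit_det M).mpr (isUnit_iff_ne_zero.mpr hne)
  rw [Matrix.rank_of_isUnit M hu, Fintype.card_fin]

end CoverSmallCuts
end
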